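/- Let Λ be a commutative ring, p a prime, and f ≥ 1 an integer. Let φ : Λ((u)) → Λ((u)) be the map on formal Laurent series over Λ given by φ(Σ_n α_n u^n) = Σ_n α_n u^{p·n}. If μ_0, …, μ_{f−1} ∈ Λ((u)) satisfy μ_i = φ(μ_{i−1}) for every i ∈ Z/fZ (indices taken modulo f), then there is a single element λ ∈ Λ such that μ_i equals the constant series λ for all i. (This is the computation underlying the paper's lemma that the endomorphism ring of a free rank one Breuil–Kisin module, or of a free rank one étale φ-module, with Λ-coefficients is exactly Λ.) -/

import Mathlib

noncomputable section

/-- Let `Λ` be a commutative ring, `p` a prime and `f ≥ 1`.  Let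
`φ : Λ((u)) → Λ((u))` be the map `Σ αₙ uⁿ ↦ Σ αₙ u^{p·n}` (characterised coefficientwise).
If `μ : ℤ/f → Λ((u))` satisfies `μ_i = φ(μ_{i−1})` for every `i`, then there is a single
`λ ∈ Λ` with `μ_i` equal to the constant series `λ` for all `i`. -/
theorem statement_18
    (Λ : Type) [CommRing Λ] (p : ℕ) (hp : p.Prime) (f : ℕ) [NeZero f]
    (φL : LaurentSeries Λ →+ LaurentSeries Λ)
    (hφ1 : ∀ (x : LaurentSeries Λ) (k : ℤ), (φL x).coeff (p * k) = x.coeff k)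
    (hφ2 : ∀ (x : LaurentSeries Λ) (n : ℤ), ¬(p : ℤ) ∣ n → (φL x).coeff n = 0)
    (μ : ZMod f → LaurentSeries Λ) (hμ : ∀ i, μ i = φL (μ (i - 1))) :
    ∃ lam : Λ, ∀ i, μ i = HahnSeries.C lam := by
  have hp2 : 2 ≤ p := hp.two_le
  -- all nonzero coefficients vanish
  have keyN : ∀ N : ℕ, ∀ n : ℤ, n.natAbs ≤ N → n ≠ 0 → ∀ i, (μ i).coeff n = 0 := by
    intro N
    induction N with
    | zero => intro n hn h0 i; exfalso; omega
    | succ N ih =>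
      intro n hn h0 i
      by_cases hd : (p : ℤ) ∣ n
      · obtain ⟨m, rfl⟩ := hd
        rw [hμ i, hφ1]
        have hm0 : m ≠ 0 := by rintro rfl; simp at h0
        apply ih m _ hm0
        have h1 : ((p : ℤ) * m).natAbs = p * m.natAbs := by
          rw [Int.natAbs_mul]; simp
        have h2 : 1 ≤ m.natAbs := Int.natAbs_pos.mpr hm0
        have h3 : m.natAbs < ((p : ℤ) * m).natAbs := by
          rw [h1]
          calc m.natAbs < 2 * m.natAbs := by omega
            _ ≤ p * m.natAbs := Nat.mul_le_mul_right _ hp2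
        omega
      · rw [hμ i]; exact hφ2 _ _ hd
  have key : ∀ n : ℤ, n ≠ 0 → ∀ i, (μ i).coeff n = 0 := fun n h0 =>
    keyN n.natAbs n le_rfl h0
  -- constant coefficients all agree
  set c : ZMod f → Λ := fun i => (μ i).coeff 0 with hc
  have hstep : ∀ i, c i = c (i - 1) := by
    intro i
    have := hφ1 (μ (i - 1)) 0
    simpa [hc, hμ i] using this
  have hall : ∀ (k : ℕ) (i : ZMod f), c i = c (i - k) := by
    intro k
    induction k with
    | zero => simp
    | succ k ih =>
      intro i
      rw [ih i, hstep (i - k)]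
      push_cast
      ring_nf
  have hconst : ∀ i, c i = c 0 := by
    intro i
    have h := hall i.val i
    have hi : ((i.val : ℕ) : ZMod f) = i := by
      simp [ZMod.natCast_val, ZMod.cast_id]
    rw [hi] at h
    simpa using h
  refine ⟨c 0, fun i => ?_⟩
  ext n
  rcases eq_or_ne n 0 with rfl | hn
  · simpa [HahnSeries.C_apply, HahnSeries.coeff_single] using hconst i
  · rw [key n hn i]
    simp [HahnSeries.C_apply, HahnSeries.coeff_single, hn]
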